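/- Let a, b, m, qξ, qη : ℝ → ℝ be continuous, X : ℝ → E differentiable with X'(t) = a(t)·X(t) + b(t)·(m(t)·μ + qξ(t)·ξ + qη(t)·η) on [0,1], and suppose the orthogonal component X⊥(t) := X(t) − M(t)·μ − Qξ(t)·ξ − Qη(t)·η satisfies ‖X⊥(0)‖² = d, where M(t) := ⟨X(t),μ⟩/d, Qξ(t) := ⟨X(t),ξ⟩/(nd), Qη(t) := ⟨X(t),η⟩/(ndσ²). Then for all t ∈ [0,1]: ‖X(t)‖²/d = M(t)² + n·Qξ(t)² + n·σ²·Qη(t)² + exp(2·∫₀ᵗ a(s) ds). -/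

import Mathlib

open scoped RealInnerProductSpace

/-- The normalized squared norm of the transported sample decomposes into the
summary statistics plus the exponential factor from the orthogonal component. -/
theorem stmt_5 {E : Type*} [NormedAddCommGroup E] [InnerProductSpace ℝ E]
    (d σ : ℝ) (hd : 0 < d) (hσ : 0 < σ) (n : ℕ) (hn : 1 ≤ n)
    (μ ξ η : E)
    (hμξ : ⟪μ, ξ⟫ = 0) (hμη : ⟪μ, η⟫ = 0) (hξη : ⟪ξ, η⟫ = 0)
    (hμ : ‖μ‖ ^ 2 = d) (hξ : ‖ξ‖ ^ 2 = n * d) (hη : ‖η‖ ^ 2 = n * d * σ ^ 2)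
    (a b m qξ qη : ℝ → ℝ)
    (ha : Continuous a) (hb : Continuous b) (hm : Continuous m)
    (hqξ : Continuous qξ) (hqη : Continuous qη)
    (X : ℝ → E)
    (hX : ∀ t ∈ Set.Icc (0 : ℝ) 1,
      HasDerivAt X (a t • X t + b t • (m t • μ + qξ t • ξ + qη t • η)) t)
    (M Qξ Qη : ℝ → ℝ) (Xperp : ℝ → E)
    (hM : M = fun t => ⟪X t, μ⟫ / d)
    (hQξ : Qξ = fun t => ⟪X t, ξ⟫ / (n * d))
    (hQη : Qη = fun t => ⟪X t, η⟫ / (n * d * σ ^ 2))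
    (hXperp : Xperp = fun t => X t - M t • μ - Qξ t • ξ - Qη t • η)
    (hinit : ‖Xperp 0‖ ^ 2 = d) :
    ∀ t ∈ Set.Icc (0 : ℝ) 1,
      ‖X t‖ ^ 2 / d =
        M t ^ 2 + n * Qξ t ^ 2 + n * σ ^ 2 * Qη t ^ 2 +
          Real.exp (2 * ∫ s in (0 : ℝ)..t, a s) := by
  have hd' : d ≠ 0 := ne_of_gt hd
  have hn0 : (0 : ℝ) < n := by exact_mod_cast Nat.lt_of_lt_of_le Nat.zero_lt_one hn
  have hn' : (n : ℝ) ≠ 0 := ne_of_gt hn0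
  have hσ' : σ ^ 2 ≠ 0 := by positivity
  -- inner products of the basis vectors
  have hμμ : ⟪μ, μ⟫ = d := by rw [real_inner_self_eq_norm_sq]; exact hμ
  have hξξ : ⟪ξ, ξ⟫ = n * d := by rw [real_inner_self_eq_norm_sq]; exact hξ
  have hηη : ⟪η, η⟫ = n * d * σ ^ 2 := by rw [real_inner_self_eq_norm_sq]; exact hη
  have hξμ : ⟪ξ, μ⟫ = 0 := by rw [real_inner_comm]; exact hμξ
  have hημ : ⟪η, μ⟫ = 0 := by rw [real_inner_comm]; exact hμη
  have hηξ : ⟪η, ξ⟫ = 0 := by rw [real_inner_comm]; exact hξη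
  -- orthogonality of Xperp to μ, ξ, η
  have hpμ : ∀ t, ⟪Xperp t, μ⟫ = 0 := by
    intro t
    simp only [hXperp, hM, inner_sub_left, real_inner_smul_left, hμμ, hξμ, hημ]
    field_simp
    ring
  have hpξ : ∀ t, ⟪Xperp t, ξ⟫ = 0 := by
    intro t
    simp only [hXperp, hQξ, inner_sub_left, real_inner_smul_left, hξξ, hμξ, hηξ]
    field_simp
    ring
  have hpη : ∀ t, ⟪Xperp t, η⟫ = 0 := by
    intro t
    simp only [hXperp, hQη, inner_sub_left, real_inner_smul_left, hηη, hμη, hξη]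
    field_simp
    ring
  have hμp : ∀ t, ⟪μ, Xperp t⟫ = 0 := fun t => by rw [real_inner_comm]; exact hpμ t
  have hξp : ∀ t, ⟪ξ, Xperp t⟫ = 0 := fun t => by rw [real_inner_comm]; exact hpξ t
  have hηp : ∀ t, ⟪η, Xperp t⟫ = 0 := fun t => by rw [real_inner_comm]; exact hpη t
  -- decomposition of X
  have hx : ∀ t, X t = Xperp t + (M t • μ + Qξ t • ξ + Qη t • η) := by
    intro t; rw [hXperp]; module
  -- Pythagoras
  have hpyth : ∀ t, ‖X t‖ ^ 2 =
      ‖Xperp t‖ ^ 2 + M t ^ 2 * d + Qξ t ^ 2 * (n * d) + Qη t ^ 2 * (n * d * σ ^ 2) := by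
    intro t
    rw [← real_inner_self_eq_norm_sq, ← real_inner_self_eq_norm_sq]
    conv_lhs => rw [hx t]
    simp only [inner_add_left, inner_add_right, real_inner_smul_left, real_inner_smul_right,
      hpμ, hpξ, hpη, hμp, hξp, hηp, hμμ, hξξ, hηη, hμξ, hμη, hξη, hξμ, hημ, hηξ]
    ring
  -- inner products of X with the basis
  have hXμ : ∀ t, ⟪X t, μ⟫ = M t * d := by
    intro t; rw [hM]; field_simp
  have hXξ : ∀ t, ⟪X t, ξ⟫ = Qξ t * (n * d) := by
    intro t; rw [hQξ]; field_simp
  have hXη : ∀ t, ⟪X t, η⟫ = Qη t * (n * d * σ ^ 2) := by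
    intro t; rw [hQη]; field_simp
  -- ⟪X, Xperp⟫ = ‖Xperp‖²
  have hXp : ∀ t, ⟪X t, Xperp t⟫ = ⟪Xperp t, Xperp t⟫ := by
    intro t
    conv_lhs => rw [hx t]
    simp only [inner_add_left, real_inner_smul_left, hμp, hξp, hηp]
    ring
  -- velocity
  set V : ℝ → E := fun t => a t • X t + b t • (m t • μ + qξ t • ξ + qη t • η) with hV
  -- derivatives of M, Qξ, Qη
  have hMd : ∀ t ∈ Set.Icc (0 : ℝ) 1, HasDerivAt M (⟪V t, μ⟫ / d) t := by
    intro t ht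
    have h := HasDerivAt.inner ℝ (hX t ht) (hasDerivAt_const t μ)
    simp only [inner_zero_right, zero_add, add_zero] at h
    rw [hM]
    exact h.div_const d
  have hQξd : ∀ t ∈ Set.Icc (0 : ℝ) 1, HasDerivAt Qξ (⟪V t, ξ⟫ / (n * d)) t := by
    intro t ht
    have h := HasDerivAt.inner ℝ (hX t ht) (hasDerivAt_const t ξ)
    simp only [inner_zero_right, zero_add, add_zero] at h
    rw [hQξ]
    exact h.div_const _
  have hQηd : ∀ t ∈ Set.Icc (0 : ℝ) 1, HasDerivAt Qη (⟪V t, η⟫ / (n * d * σ ^ 2)) t := by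
    intro t ht
    have h := HasDerivAt.inner ℝ (hX t ht) (hasDerivAt_const t η)
    simp only [inner_zero_right, zero_add, add_zero] at h
    rw [hQη]
    exact h.div_const _
  -- derivative of Xperp
  set W : ℝ → E := fun t =>
    V t - (⟪V t, μ⟫ / d) • μ - (⟪V t, ξ⟫ / (n * d)) • ξ - (⟪V t, η⟫ / (n * d * σ ^ 2)) • η
    with hW
  have hpd : ∀ t ∈ Set.Icc (0 : ℝ) 1, HasDerivAt Xperp (W t) t := by
    intro t ht
    rw [hXperp]
    exact (((hX t ht).sub ((hMd t ht).smul_const μ)).sub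
      ((hQξd t ht).smul_const ξ)).sub ((hQηd t ht).smul_const η)
  -- squared norm of Xperp
  set g : ℝ → ℝ := fun t => ⟪Xperp t, Xperp t⟫ with hg
  have hWp : ∀ t, ⟪W t, Xperp t⟫ = a t * g t := by
    intro t
    simp only [hW, hV, inner_sub_left, inner_add_left, real_inner_smul_left,
      hμp, hξp, hηp, hXp]
    ring
  have hgd : ∀ t ∈ Set.Icc (0 : ℝ) 1, HasDerivAt g (2 * a t * g t) t := by
    intro t ht
    have h := HasDerivAt.inner ℝ (hpd t ht) (hpd t ht)
    have h2 : ⟪Xperp t, W t⟫ = a t * g t := by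
      rw [real_inner_comm]; exact hWp t
    have h3 : ⟪Xperp t, W t⟫ + ⟪W t, Xperp t⟫ = 2 * a t * g t := by
      rw [h2, hWp t]; ring
    rw [h3] at h
    exact h
  -- the integral of a
  set A : ℝ → ℝ := fun t => ∫ s in (0 : ℝ)..t, a s with hA
  have hAd : ∀ t : ℝ, HasDerivAt A (a t) t := by
    intro t
    exact intervalIntegral.integral_hasDerivAt_right (ha.intervalIntegrable _ _)
      (ha.stronglyMeasurableAtFilter _ _) ha.continuousAt
  -- F = g * exp(-2A) is constant on [0,1]
  set F : ℝ → ℝ := fun t => g t * Real.exp (-(2 * A t)) with hF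
  have hFd : ∀ t ∈ Set.Icc (0 : ℝ) 1, HasDerivAt F 0 t := by
    intro t ht
    have hE : HasDerivAt (fun t => Real.exp (-(2 * A t)))
        (Real.exp (-(2 * A t)) * (-(2 * a t))) t :=
      (((hAd t).const_mul 2).neg).exp
    have h := (hgd t ht).mul hE
    rw [show 2 * a t * g t * Real.exp (-(2 * A t)) + g t * (Real.exp (-(2 * A t)) * (-(2 * a t)))
      = 0 by ring] at h
    exact h
  have hconst : ∀ t ∈ Set.Icc (0 : ℝ) 1, F t = F 0 := by
    apply constant_of_has_deriv_right_zero
    · intro t ht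
      exact (hFd t ht).continuousAt.continuousWithinAt
    · intro t ht
      exact (hFd t (Set.mem_Icc_of_Ico ht)).hasDerivWithinAt
  have hA0 : A 0 = 0 := intervalIntegral.integral_same
  have hF0 : F 0 = d := by
    simp only [hF, hA0, mul_zero, neg_zero, Real.exp_zero, mul_one, hg,
      real_inner_self_eq_norm_sq]
    exact hinit
  -- conclusion
  intro t ht
  have hgt : g t = d * Real.exp (2 * A t) := by
    have h := hconst t ht
    rw [hF0] at h
    have := congrArg (fun x => x * Real.exp (2 * A t)) h
    simp only [hF] at this ⊢
    rwa [mul_assoc, ← Real.exp_add, neg_add_cancel, Real.exp_zero, mul_one] at this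
  have hgnorm : ‖Xperp t‖ ^ 2 = d * Real.exp (2 * A t) := by
    rw [← real_inner_self_eq_norm_sq]; exact hgt
  rw [hpyth t, hgnorm]
  field_simp
  ring
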